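/- No MASA of B(ℓ²ₙ) (2 ≤ n < ∞) is flat: for any MASA A in the n×n matrices Mₙ(ℂ), there is no unitary u making all states of a 1/2-dense finite set F of states nearly equal on uAu*. Concretely, if F is a finite 1/2-dense set of states on Mₙ(ℂ), then for every MASA A there exist φ', ψ' ∈ F with ‖(φ' − ψ')|_A‖ ≥ 1. -/

import Mathlib

open scoped InnerProductSpace

namespace ErgodicEmbeddings

variable {H : Type*} [NormedAddCommGroup H] [InnerProductSpace ℂ H] [CompleteSpace H]

/-- The bounded functional on `B(H)` given by `x ↦ ⟪η, x ξ⟫`. -/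
noncomputable def vecFunc (ξ η : H) : (H →L[ℂ] H) →L[ℂ] ℂ :=
  (innerSL ℂ η).comp (ContinuousLinearMap.apply ℂ H ξ)

/-- A bounded functional on `B(H)` is *normal* if it lies in the norm closure of the
linear span of the vector functionals (i.e. it comes from a trace-class operator). -/
def IsNormalFunctional (φ : (H →L[ℂ] H) →L[ℂ] ℂ) : Prop :=
  φ ∈ closure (Submodule.span ℂ (Set.range fun p : H × H => vecFunc p.1 p.2) : Set _)

/-- A normal state. -/
def IsNormalState (φ : (H →L[ℂ] H) →L[ℂ] ℂ) : Prop :=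
  IsNormalFunctional φ ∧ φ 1 = 1 ∧ ∀ x : H →L[ℂ] H, 0 ≤ (φ (star x * x)).re ∧ (φ (star x * x)).im = 0

/-- The functional `u·φ·u* : x ↦ φ (u* x u)`. -/
noncomputable def conjFunc (u : H →L[ℂ] H) (φ : (H →L[ℂ] H) →L[ℂ] ℂ) :
    (H →L[ℂ] H) →L[ℂ] ℂ :=
  φ.comp (((ContinuousLinearMap.mul ℂ (H →L[ℂ] H)) (star u)).comp
    ((ContinuousLinearMap.mul ℂ (H →L[ℂ] H)).flip u))

/-- Norm of the restriction of a functional to a subset (over its unit ball). -/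
noncomputable def restNorm (φ : (H →L[ℂ] H) →L[ℂ] ℂ) (A : Set (H →L[ℂ] H)) : ℝ :=
  sSup {r : ℝ | ∃ x ∈ A, ‖x‖ ≤ 1 ∧ r = ‖φ x‖}

/-- A unitary element of the von Neumann algebra `M`. -/
def IsUnitaryIn (M : VonNeumannAlgebra H) (u : H →L[ℂ] H) : Prop :=
  u ∈ M ∧ star u * u = 1 ∧ u * star u = 1

/-- `y` belongs to the closure of `S` in the weak operator topology. -/
def InWOTClosure (S : Set (H →L[ℂ] H)) (y : H →L[ℂ] H) : Prop :=
  ∀ (F : Finset (H × H)) (ε : ℝ), 0 < ε →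
    ∃ z ∈ S, ∀ p ∈ F, ‖⟪p.2, (z - y) p.1⟫_ℂ‖ < ε

/-- The set of `Ad`-conjugates of `x` by unitaries of `M`. -/
def unitaryConjugates (M : VonNeumannAlgebra H) (x : H →L[ℂ] H) : Set (H →L[ℂ] H) :=
  {z | ∃ u : H →L[ℂ] H, IsUnitaryIn M u ∧ z = u * x * star u}

/-- The inclusion `M ⊆ 𝓜` is *MV-ergodic* if for every `x ∈ 𝓜` the weak closure of the
convex hull of the unitary conjugates of `x` by unitaries of `M` contains a scalar. -/
def MVErgodic (M 𝓜 : VonNeumannAlgebra H) : Prop :=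
  ∀ x ∈ 𝓜, ∃ c : ℂ, InWOTClosure (convexHull ℝ (unitaryConjugates M x)) (c • (1 : H →L[ℂ] H))

/-- `M` is a factor: its center consists of the scalars. -/
def IsFactor (M : VonNeumannAlgebra H) : Prop :=
  ∀ x ∈ M, x ∈ M.commutant → ∃ c : ℂ, x = c • (1 : H →L[ℂ] H)

/-- Orthogonal projection onto the closure of `{a ξ | a ∈ S}`'s linear span. -/
noncomputable def cycProj (S : Set (H →L[ℂ] H)) (ξ : H) : H →L[ℂ] H :=
  haveI : CompleteSpace (Submodule.span ℂ ((fun a : H →L[ℂ] H => a ξ) '' S)).topologicalClosure :=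
    (Submodule.span ℂ ((fun a : H →L[ℂ] H => a ξ) '' S)).isClosed_topologicalClosure.completeSpace_coe
  (Submodule.span ℂ ((fun a : H →L[ℂ] H => a ξ) '' S)).topologicalClosure.subtypeL.comp
    (Submodule.orthogonalProjection (Submodule.span ℂ ((fun a : H →L[ℂ] H => a ξ) '' S)).topologicalClosure)

/-- The von Neumann algebra generated by a self-adjoint unital set: its double commutant. -/
def vnGen (S : Set (H →L[ℂ] H)) : Set (H →L[ℂ] H) :=
  Set.centralizer (Set.centralizer S)



section Auxiliary

lemma vecFunc_apply' (ξ η : H) (x : H →L[ℂ] H) : vecFunc ξ η x = ⟪η, x ξ⟫_ℂ := rfl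

lemma isNormalState_vecFunc (ξ : H) (hξ : ‖ξ‖ = 1) : IsNormalState (vecFunc ξ ξ) := by
  refine ⟨subset_closure (Submodule.subset_span ⟨(ξ, ξ), rfl⟩), ?_, ?_⟩
  · simp [vecFunc_apply', inner_self_eq_norm_sq_to_K, hξ]
  · intro x
    have h : vecFunc ξ ξ (star x * x) = ⟪x ξ, x ξ⟫_ℂ := by
      rw [vecFunc_apply', ContinuousLinearMap.mul_apply, ContinuousLinearMap.star_eq_adjoint,
        ContinuousLinearMap.adjoint_inner_right]
    rw [h]
    constructor
    · exact inner_self_nonneg (𝕜 := ℂ) (x := x ξ)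
    · exact inner_self_im (𝕜 := ℂ) (x ξ)

lemma exists_symmetry [FiniteDimensional ℂ H] [Nontrivial H] (A : VonNeumannAlgebra H)
    (hMASA : (↑A.commutant : Set (H →L[ℂ] H)) = A)
    (hx : ∃ x : H →L[ℂ] H, ¬ ∃ c : ℂ, x = c • (1 : H →L[ℂ] H)) :
    ∃ a : H →L[ℂ] H, a ∈ A ∧ ‖a‖ ≤ 1 ∧
      ∃ ξ η : H, ‖ξ‖ = 1 ∧ ‖η‖ = 1 ∧ a ξ = ξ ∧ a η = -η := by
  obtain ⟨x₀, hx₀⟩ := hx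
  -- every element of A commutes with every element of A
  have hcomm : ∀ b ∈ A, ∀ g ∈ A, g * b = b * g := by
    intro b hb g hg
    have : b ∈ A.commutant := by rw [← SetLike.mem_coe, hMASA]; exact hb
    exact VonNeumannAlgebra.mem_commutant_iff.mp this g hg
  -- A contains a non-scalar element
  have hns : ∃ a : H →L[ℂ] H, a ∈ A ∧ ¬ ∃ c : ℂ, a = c • (1 : H →L[ℂ] H) := by
    by_contra h
    push_neg at h
    have hall : ∀ z : H →L[ℂ] H, z ∈ A := by
      intro z
      rw [← SetLike.mem_coe, ← hMASA]
      refine VonNeumannAlgebra.mem_commutant_iff.mpr ?_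
      intro g hg
      obtain ⟨c, rfl⟩ := h g hg
      simp [smul_mul_assoc, mul_smul_comm]
    exact hx₀ (h x₀ (hall x₀))
  obtain ⟨a, haA, hans⟩ := hns
  -- eigenvalue of a
  obtain ⟨μ, hμ⟩ := Module.End.exists_eigenvalue (↑a : H →ₗ[ℂ] H)
  set E : Submodule ℂ H := Module.End.eigenspace (↑a : H →ₗ[ℂ] H) μ with hEdef
  have hEbot : E ≠ ⊥ := hμ
  have hEtop : E ≠ ⊤ := by
    intro h
    apply hans
    refine ⟨μ, ContinuousLinearMap.ext fun v => ?_⟩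
    have : v ∈ E := h ▸ Submodule.mem_top
    have := Module.End.mem_eigenspace_iff.mp this
    simpa using this
  -- invariance of E under elements of A
  have hinv : ∀ b ∈ A, ∀ v ∈ E, b v ∈ E := by
    intro b hb v hv
    have hab : a * b = b * a := hcomm b hb a haA
    rw [hEdef, Module.End.mem_eigenspace_iff] at hv ⊢
    have h1 : a (b v) = b (a v) := by
      have := congrArg (fun z : H →L[ℂ] H => z v) hab
      simpa using this
    simp only [ContinuousLinearMap.coe_coe] at hv ⊢
    rw [h1, hv, map_smul]
  -- the projection
  let p : H →L[ℂ] H := E.subtypeL.comp (E.orthogonalProjectionOnto)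
  have hpv : ∀ v : H, p v = (E.orthogonalProjectionOnto v : H) := fun v => rfl
  have hpmemE : ∀ v : H, p v ∈ E := fun v => (E.orthogonalProjectionOnto v).2
  have hpid : ∀ v ∈ E, p v = v := by
    intro v hv
    rw [hpv]
    exact congrArg _ (Submodule.orthogonalProjectionOnto_mem_subspace_eq_self (⟨v, hv⟩ : E))
  have hporth : ∀ v ∈ Eᗮ, p v = 0 := by
    intro v hv
    rw [hpv, Submodule.orthogonalProjectionOnto_apply_of_mem_orthogonal hv]
    rfl
  -- b maps Eᗮ to Eᗮ for b ∈ A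
  have hinvorth : ∀ b ∈ A, ∀ w ∈ Eᗮ, b w ∈ Eᗮ := by
    intro b hb w hw
    rw [Submodule.mem_orthogonal] at hw ⊢
    intro u hu
    have hsb : star b ∈ A := star_mem hb
    have : ⟪u, b w⟫_ℂ = ⟪(star b) u, w⟫_ℂ := by
      rw [ContinuousLinearMap.star_eq_adjoint, ContinuousLinearMap.adjoint_inner_left]
    rw [this]
    exact hw _ (hinv (star b) hsb u hu)
  -- p ∈ A
  have hpA : p ∈ A := by
    rw [← SetLike.mem_coe, ← hMASA]
    refine VonNeumannAlgebra.mem_commutant_iff.mpr ?_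
    intro b hb
    refine ContinuousLinearMap.ext fun v => ?_
    have hdecomp : v = p v + (v - p v) := by abel
    have hw : v - p v ∈ Eᗮ := Submodule.sub_starProjection_mem_orthogonal (K := E) v
    have h1 : b (p v) ∈ E := hinv b hb _ (hpmemE v)
    have h2 : b (v - p v) ∈ Eᗮ := hinvorth b hb _ hw
    calc (b * p) v = b (p v) := rfl
      _ = p (b (p v)) + p (b (v - p v)) := by rw [hpid _ h1, hporth _ h2]; abel
      _ = p (b (p v) + b (v - p v)) := by rw [map_add]
      _ = p (b v) := by rw [← map_add, ← hdecomp]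
      _ = (p * b) v := rfl
  -- the symmetry
  set s : H →L[ℂ] H := (2 : ℂ) • p - 1 with hsdef
  have hsA : s ∈ A := A.sub_mem (A.smul_mem hpA _) A.one_mem
  have hsapp : ∀ v : H, s v = p v - (v - p v) := by
    intro v
    simp [hsdef, two_smul]
    abel
  have hsnorm : ‖s‖ ≤ 1 := by
    refine ContinuousLinearMap.opNorm_le_bound _ zero_le_one fun v => ?_
    rw [one_mul, hsapp]
    have hi : ⟪p v, v - p v⟫_ℂ = 0 := by
      exact (Submodule.mem_orthogonal _ _).mp (Submodule.sub_starProjection_mem_orthogonal (K := E) v) _ (hpmemE v)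
    have h1 : ‖p v - (v - p v)‖ ^ 2 = ‖p v‖ ^ 2 + ‖v - p v‖ ^ 2 := by
      rw [@norm_sub_sq ℂ]
      simp [hi]
    have h2 : ‖v‖ ^ 2 = ‖p v‖ ^ 2 + ‖v - p v‖ ^ 2 := by
      have : v = p v + (v - p v) := by abel
      nth_rewrite 1 [this]
      rw [@norm_add_sq ℂ]
      simp [hi]
    have := h1.trans h2.symm
    nlinarith [norm_nonneg (p v - (v - p v)), norm_nonneg v]
  -- unit vectors
  obtain ⟨w, hwE, hw0⟩ := Submodule.exists_mem_ne_zero_of_ne_bot hEbot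
  have hEorthbot : Eᗮ ≠ ⊥ := fun h => hEtop (Submodule.orthogonal_eq_bot_iff.mp h)
  obtain ⟨w', hw'E, hw'0⟩ := Submodule.exists_mem_ne_zero_of_ne_bot hEorthbot
  refine ⟨s, hsA, hsnorm, (‖w‖ : ℂ)⁻¹ • w, (‖w'‖ : ℂ)⁻¹ • w', norm_smul_inv_norm hw0,
    norm_smul_inv_norm hw'0, ?_, ?_⟩
  · set ξ := (‖w‖ : ℂ)⁻¹ • w
    have hξE : ξ ∈ E := E.smul_mem _ hwE
    rw [hsapp, hpid _ hξE]
    abel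
  · set η := (‖w'‖ : ℂ)⁻¹ • w'
    have hηE : η ∈ Eᗮ := Eᗮ.smul_mem _ hw'E
    rw [hsapp, hporth _ hηE]
    abel

end Auxiliary

set_option maxHeartbeats 1000000 in
/-- Theorem 5.5, 2°, finite dimensional case: no MASA of a finite type I
factor `B(ℓ²ₙ)`, `2 ≤ n < ∞`, is flat. -/
theorem masa_in_matrix_factor_not_flat (n : ℕ) (hn : 2 ≤ n)
    (F : Finset ((EuclideanSpace ℂ (Fin n) →L[ℂ] EuclideanSpace ℂ (Fin n)) →L[ℂ] ℂ))
    (hFstates : ∀ φ ∈ F, IsNormalState φ)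
    (hFdense : ∀ ω : (EuclideanSpace ℂ (Fin n) →L[ℂ] EuclideanSpace ℂ (Fin n)) →L[ℂ] ℂ,
      IsNormalState ω → ∃ χ ∈ F, ‖ω - χ‖ ≤ 1 / 2)
    (A : VonNeumannAlgebra (EuclideanSpace ℂ (Fin n)))
    (hMASA : (↑A.commutant : Set (EuclideanSpace ℂ (Fin n) →L[ℂ] EuclideanSpace ℂ (Fin n)))
      = A) :
    ∃ φ' ∈ F, ∃ ψ' ∈ F,
      1 ≤ restNorm (φ' - ψ')
        (A : Set (EuclideanSpace ℂ (Fin n) →L[ℂ] EuclideanSpace ℂ (Fin n))) := by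
  classical
  have h0 : 0 < n := by omega
  have h1 : 1 < n := by omega
  set e₀ : EuclideanSpace ℂ (Fin n) := EuclideanSpace.single (⟨0, h0⟩ : Fin n) 1 with he0
  set e₁ : EuclideanSpace ℂ (Fin n) := EuclideanSpace.single (⟨1, h1⟩ : Fin n) 1 with he1
  have h00 : ⟪e₀, e₀⟫_ℂ = 1 := by
    rw [he0, EuclideanSpace.inner_single_left]
    simp [EuclideanSpace.single_apply]
  have h01 : ⟪e₀, e₁⟫_ℂ = 0 := by
    rw [he0, he1, EuclideanSpace.inner_single_left]
    simp [EuclideanSpace.single_apply]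
  have he0ne : e₀ ≠ 0 := by
    intro h
    have := congrFun (congrArg (fun v : EuclideanSpace ℂ (Fin n) => (v : Fin n → ℂ)) h) ⟨0, h0⟩
    simp [he0, EuclideanSpace.single_apply] at this
  have he1ne : e₁ ≠ 0 := by
    intro h
    have := congrFun (congrArg (fun v : EuclideanSpace ℂ (Fin n) => (v : Fin n → ℂ)) h) ⟨1, h1⟩
    simp [he1, EuclideanSpace.single_apply] at this
  haveI : Nontrivial (EuclideanSpace ℂ (Fin n)) := nontrivial_of_ne e₀ 0 he0ne
  -- a non-scalar operator
  set x : EuclideanSpace ℂ (Fin n) →L[ℂ] EuclideanSpace ℂ (Fin n) :=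
    (innerSL ℂ e₀).smulRight e₀ with hx
  have hxapp : ∀ v, x v = ⟪e₀, v⟫_ℂ • e₀ := fun v => rfl
  have hns : ¬ ∃ c : ℂ, x = c • (1 : EuclideanSpace ℂ (Fin n) →L[ℂ] EuclideanSpace ℂ (Fin n)) := by
    rintro ⟨c, hc⟩
    have hA : x e₀ = c • e₀ := by rw [hc]; rfl
    have hB : x e₁ = c • e₁ := by rw [hc]; rfl
    rw [hxapp, h00, one_smul] at hA
    rw [hxapp, h01, zero_smul] at hB
    have hc0 : c = 0 := by
      by_contra h
      exact he1ne (by simpa [smul_eq_zero, h] using hB.symm)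
    rw [hc0, zero_smul] at hA
    exact he0ne hA
  obtain ⟨a, haA, hanorm, ξ, η, hξ, hη, haξ, haη⟩ := exists_symmetry A hMASA ⟨x, hns⟩
  obtain ⟨φ', hφ'F, hφ'⟩ := hFdense (vecFunc ξ ξ) (isNormalState_vecFunc ξ hξ)
  obtain ⟨ψ', hψ'F, hψ'⟩ := hFdense (vecFunc η η) (isNormalState_vecFunc η hη)
  refine ⟨φ', hφ'F, ψ', hψ'F, ?_⟩
  have hφa : vecFunc ξ ξ a = 1 := by
    rw [vecFunc_apply', haξ, inner_self_eq_norm_sq_to_K, hξ]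
    norm_num
  have hψa : vecFunc η η a = -1 := by
    rw [vecFunc_apply', haη, inner_neg_right, inner_self_eq_norm_sq_to_K, hη]
    norm_num
  have key : 1 ≤ ‖(φ' - ψ') a‖ := by
    have e1 : ‖(vecFunc ξ ξ - φ') a‖ ≤ 1 / 2 := by
      calc ‖(vecFunc ξ ξ - φ') a‖ ≤ ‖vecFunc ξ ξ - φ'‖ * ‖a‖ :=
            ContinuousLinearMap.le_opNorm _ _
        _ ≤ (1 / 2) * 1 := mul_le_mul hφ' hanorm (norm_nonneg _) (by norm_num)
        _ = 1 / 2 := by norm_num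
    have e2 : ‖(vecFunc η η - ψ') a‖ ≤ 1 / 2 := by
      calc ‖(vecFunc η η - ψ') a‖ ≤ ‖vecFunc η η - ψ'‖ * ‖a‖ :=
            ContinuousLinearMap.le_opNorm _ _
        _ ≤ (1 / 2) * 1 := mul_le_mul hψ' hanorm (norm_nonneg _) (by norm_num)
        _ = 1 / 2 := by norm_num
    have hid : (vecFunc ξ ξ - vecFunc η η) a
        = (vecFunc ξ ξ - φ') a - (vecFunc η η - ψ') a + (φ' - ψ') a := by
      simp only [ContinuousLinearMap.sub_apply]
      ring
    have h2 : ‖(vecFunc ξ ξ - vecFunc η η) a‖ = 2 := by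
      rw [ContinuousLinearMap.sub_apply, hφa, hψa]
      norm_num
    have htri : ‖(vecFunc ξ ξ - vecFunc η η) a‖
        ≤ ‖(vecFunc ξ ξ - φ') a‖ + ‖(vecFunc η η - ψ') a‖ + ‖(φ' - ψ') a‖ := by
      rw [hid]
      calc ‖(vecFunc ξ ξ - φ') a - (vecFunc η η - ψ') a + (φ' - ψ') a‖
          ≤ ‖(vecFunc ξ ξ - φ') a - (vecFunc η η - ψ') a‖ + ‖(φ' - ψ') a‖ := norm_add_le _ _
        _ ≤ ‖(vecFunc ξ ξ - φ') a‖ + ‖(vecFunc η η - ψ') a‖ + ‖(φ' - ψ') a‖ := by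
            have := norm_sub_le ((vecFunc ξ ξ - φ') a) ((vecFunc η η - ψ') a)
            linarith
    rw [h2] at htri
    linarith
  refine le_csSup_of_le ?_ ⟨a, haA, hanorm, rfl⟩ key
  refine ⟨‖φ' - ψ'‖, ?_⟩
  rintro r ⟨y, hyA, hyn, rfl⟩
  exact ContinuousLinearMap.unit_le_opNorm _ _ hyn

end ErgodicEmbeddings
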